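/- Every quadratic function that is quasi-convex and bounded below on a closed convex set without flat asymptotes attains its infimum on the set. -/

import Mathlib

open Pointwise

noncomputable section

/-- A quadratic function on a real vector space. -/
def IsQuadratic {E : Type*} [AddCommGroup E] [Module ℝ E] (f : E → ℝ) : Prop :=
  ∃ (B : E →ₗ[ℝ] E →ₗ[ℝ] ℝ) (l : E →ₗ[ℝ] ℝ) (c : ℝ), ∀ x, f x = B x x + l x + c

/-- An affine subspace `M` is an f-asymptote of `F` if it is nonempty, disjoint
from `F`, and at zero distance from `F`. -/
def IsFAsymptote {E : Type*} [NormedAddCommGroup E] [NormedSpace ℝ E]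
    (M : AffineSubspace ℝ E) (F : Set E) : Prop :=
  (M : Set E).Nonempty ∧ F ∩ (M : Set E) = ∅ ∧
    ∀ ε : ℝ, 0 < ε → ∃ x ∈ F, ∃ y ∈ (M : Set E), dist x y < ε

open Filter Topology Bornology Metric

section AuxLemmas

set_option linter.unusedSectionVars false

variable {E : Type*} [NormedAddCommGroup E] [InnerProductSpace ℝ E] [FiniteDimensional ℝ E]

lemma aux_poly {a b m M : ℝ}
    (h : ∀ t : ℝ, 0 ≤ t → m ≤ a * t ^ 2 + b * t ∧ a * t ^ 2 + b * t ≤ M) :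
    a = 0 ∧ b = 0 := by
  have ha : a = 0 := by
    rcases lt_trichotomy a 0 with ha | ha | ha
    · exfalso
      set T : ℝ := max 1 ((|b| + |m| + 1) / (-a)) with hT
      have hT1 : (1:ℝ) ≤ T := le_max_left _ _
      have hT2 : (|b| + |m| + 1) / (-a) ≤ T := le_max_right _ _
      have hT2' : |b| + |m| + 1 ≤ (-a) * T := by
        rw [div_le_iff₀ (by linarith : (0:ℝ) < -a)] at hT2; linarith [hT2]
      have h1 := (h T (by linarith)).1
      have hb1 : b ≤ |b| := le_abs_self b
      have hm1 : -|m| ≤ m := neg_abs_le m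
      have e1 : a * T + |b| ≤ -(|m| + 1) := by nlinarith
      have e2 : T * (a * T + |b|) ≤ T * (-(|m| + 1)) :=
        mul_le_mul_of_nonneg_left e1 (by linarith)
      have e3 : T * (-(|m| + 1)) ≤ -(|m| + 1) := by nlinarith [abs_nonneg m]
      have e4 : b * T ≤ |b| * T := mul_le_mul_of_nonneg_right hb1 (by linarith)
      nlinarith
    · exact ha
    · exfalso
      set T : ℝ := max 1 ((|b| + |M| + 1) / a) with hT
      have hT1 : (1:ℝ) ≤ T := le_max_left _ _
      have hT2 : (|b| + |M| + 1) / a ≤ T := le_max_right _ _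
      have hT2' : |b| + |M| + 1 ≤ a * T := by
        rw [div_le_iff₀ ha] at hT2; linarith [hT2]
      have h1 := (h T (by linarith)).2
      have hb1 : -|b| ≤ b := neg_abs_le b
      have hm1 : M ≤ |M| := le_abs_self M
      have e1 : |M| + 1 ≤ a * T - |b| := by nlinarith
      have e2 : T * (a * T - |b|) ≥ T * (|M| + 1) :=
        mul_le_mul_of_nonneg_left e1 (by linarith)
      have e3 : T * (|M| + 1) ≥ |M| + 1 := by nlinarith [abs_nonneg M]
      have e4 : -|b| * T ≤ b * T := mul_le_mul_of_nonneg_right hb1 (by linarith)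
      nlinarith
  subst ha
  refine ⟨rfl, ?_⟩
  rcases lt_trichotomy b 0 with hb | hb | hb
  · exfalso
    have hpos : (0:ℝ) ≤ (|m| + 1) / (-b) := le_of_lt (div_pos (by positivity) (by linarith))
    have h1 := (h ((|m| + 1) / (-b)) hpos).1
    have : b * ((|m| + 1) / (-b)) = -(|m| + 1) := by
      rw [mul_div_assoc']
      rw [div_eq_iff (show (-b) ≠ 0 by linarith)]; ring
    rw [zero_mul, zero_add, this] at h1
    have := le_abs_self m
    have := neg_abs_le m
    linarith
  · exact hb
  · exfalso
    have hpos : (0:ℝ) ≤ (|M| + 1) / b := le_of_lt (div_pos (by positivity) hb)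
    have h1 := (h ((|M| + 1) / b) hpos).2
    have : b * ((|M| + 1) / b) = |M| + 1 := by
      rw [mul_div_assoc']
      rw [div_eq_iff (show b ≠ 0 by linarith)]; ring
    rw [zero_mul, zero_add, this] at h1
    have := le_abs_self M
    linarith

lemma aux_recession {C : Set E} (hcl : IsClosed C) (hconv : Convex ℝ C)
    {z : ℕ → E} (hz : ∀ j, z j ∈ C)
    (hnorm : Tendsto (fun j => ‖z j‖) atTop atTop)
    {w : E} (hw : Tendsto (fun j => ‖z j‖⁻¹ • z j) atTop (𝓝 w))
    {x : E} (hx : x ∈ C) {t : ℝ} (ht : 0 ≤ t) : x + t • w ∈ C := by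
  have h0 : Tendsto (fun j => ‖z j‖⁻¹) atTop (𝓝 0) := hnorm.inv_tendsto_atTop
  set y : ℕ → E := fun j => x + (t * ‖z j‖⁻¹) • (z j - x) with hy
  have hlim : Tendsto y atTop (𝓝 (x + t • w)) := by
    have h1 : Tendsto (fun j => t • (‖z j‖⁻¹ • z j)) atTop (𝓝 (t • w)) := hw.const_smul t
    have h2 : Tendsto (fun j => (t * ‖z j‖⁻¹) • x) atTop (𝓝 ((0:ℝ) • x)) :=
      Tendsto.smul_const (by simpa using h0.const_mul t) x
    have h3 : Tendsto (fun j => (x + t • (‖z j‖⁻¹ • z j)) - (t * ‖z j‖⁻¹) • x) atTop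
        (𝓝 ((x + t • w) - (0:ℝ) • x)) := (tendsto_const_nhds.add h1).sub h2
    rw [zero_smul, sub_zero] at h3
    convert h3 using 2 with j
    simp only [hy, smul_sub, smul_smul]
    module
  refine hcl.mem_of_tendsto hlim ?_
  have hev : ∀ᶠ j in atTop, max t 1 ≤ ‖z j‖ := hnorm.eventually_ge_atTop _
  filter_upwards [hev] with j hj
  have hzpos : (0:ℝ) < ‖z j‖ := lt_of_lt_of_le (lt_of_lt_of_le one_pos (le_max_right t 1)) hj
  have hθ0 : 0 ≤ t * ‖z j‖⁻¹ := mul_nonneg ht (by positivity)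
  have hθ1 : t * ‖z j‖⁻¹ ≤ 1 := by
    rw [mul_inv_le_iff₀ hzpos, one_mul]
    exact le_trans (le_max_left t 1) hj
  have := hconv hx (hz j) (by linarith : (0:ℝ) ≤ 1 - t * ‖z j‖⁻¹) hθ0 (by ring)
  show y j ∈ C
  convert this using 1
  simp only [hy, smul_sub]
  module

lemma aux_min_norm {K : Set E} (hne : K.Nonempty) (hcl : IsClosed K) (hconv : Convex ℝ K) :
    ∃ v ∈ K, ∀ y ∈ K, ‖v‖ ≤ ‖y‖ := by
  obtain ⟨v, hvK, hv⟩ := exists_norm_eq_iInf_of_complete_convex hne hcl.isComplete hconv 0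
  refine ⟨v, hvK, fun y hy => ?_⟩
  have h1 : ‖(0:E) - v‖ ≤ ‖(0:E) - y‖ := by
    rw [hv]
    exact ciInf_le ⟨0, by rintro _ ⟨w, rfl⟩; positivity⟩ (⟨y, hy⟩ : K)
  simpa using h1

lemma aux_cont {q : E → ℝ} (hq : IsQuadratic q) : Continuous q := by
  obtain ⟨B, l, c, h⟩ := hq
  have hfun : q = fun x => B x x + l x + c := funext h
  rw [hfun]
  set L : E →ₗ[ℝ] (E →L[ℝ] ℝ) :=
    (LinearMap.toContinuousLinearMap :
      (E →ₗ[ℝ] ℝ) ≃ₗ[ℝ] (E →L[ℝ] ℝ)).toLinearMap ∘ₗ B with hL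
  have hc1 : Continuous fun x : E => L x := L.continuous_of_finiteDimensional
  have hBc : Continuous fun x : E => B x x := by
    have : (fun x : E => B x x) = fun x : E => (L x) x := by
      funext x; simp [hL]
    rw [this]
    exact hc1.clm_apply continuous_id
  exact (hBc.add l.continuous_of_finiteDimensional).add continuous_const

end AuxLemmas

theorem quasiconvex_quadratic_attains_inf {n : ℕ}
    (F : Set (EuclideanSpace ℝ (Fin n))) (hne : F.Nonempty)
    (hconv : Convex ℝ F) (hcl : IsClosed F)
    (hasym : ∀ M : AffineSubspace ℝ (EuclideanSpace ℝ (Fin n)), ¬ IsFAsymptote M F)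
    (q : EuclideanSpace ℝ (Fin n) → ℝ) (hq : IsQuadratic q)
    (hqc : ∀ α : ℝ, Convex ℝ {x ∈ F | q x ≤ α})
    (hbdd : BddBelow (q '' F)) :
    ∃ x₀ ∈ F, ∀ x ∈ F, q x₀ ≤ q x := by
  classical
  obtain ⟨B, l, c, hB⟩ := hq
  have hqcont : Continuous q := aux_cont ⟨B, l, c, hB⟩
  have hqadd : ∀ x u : EuclideanSpace ℝ (Fin n),
      q (x + u) = q x + (B x u + B u x + l u) + B u u := by
    intro x u
    simp only [hB, map_add, LinearMap.add_apply]
    ring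
  set μ := sInf (q '' F) with hμdef
  have hμle : ∀ x ∈ F, μ ≤ q x := fun x hx => csInf_le hbdd ⟨x, hx, rfl⟩
  have hkpos : ∀ k : ℕ, (0:ℝ) < 1 / (k + 1) := by intro k; positivity
  set C : ℕ → Set (EuclideanSpace ℝ (Fin n)) :=
    fun k => {x ∈ F | q x ≤ μ + 1 / (k + 1)} with hCdef
  have hCsubF : ∀ k, C k ⊆ F := fun k x hx => hx.1
  have hCne : ∀ k, (C k).Nonempty := by
    intro k
    obtain ⟨y, ⟨x, hxF, rfl⟩, hy⟩ :=
      exists_lt_of_csInf_lt (hne.image q) (by linarith [hkpos k] : μ < μ + 1 / (k + 1))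
    exact ⟨x, hxF, le_of_lt hy⟩
  have hCcl : ∀ k, IsClosed (C k) := by
    intro k
    have : C k = F ∩ q ⁻¹' Set.Iic (μ + 1 / (k + 1)) := by
      ext x; simp [hCdef, Set.mem_sep_iff]
    rw [this]
    exact hcl.inter (isClosed_Iic.preimage hqcont)
  have hCconv : ∀ k, Convex ℝ (C k) := fun k => hqc _
  have hCanti : ∀ {k k' : ℕ}, k ≤ k' → C k' ⊆ C k := by
    intro k k' hkk' x hx
    refine ⟨hx.1, le_trans hx.2 ?_⟩
    have : (1:ℝ) / (k' + 1) ≤ 1 / (k + 1) := by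
      apply one_div_le_one_div_of_le (by positivity)
      exact_mod_cast by omega
    linarith
  -- the key induction over invariance subspaces
  have key : ∀ m : ℕ, ∀ V : Submodule ℝ (EuclideanSpace ℝ (Fin n)),
      Module.finrank ℝ (EuclideanSpace ℝ (Fin n)) ≤ Module.finrank ℝ V + m →
      (∀ k : ℕ, ∀ x ∈ closure (C k + (V : Set (EuclideanSpace ℝ (Fin n)))),
        ∀ u ∈ V, q (x + u) = q x) →
      ∃ x₀ ∈ F, ∀ x ∈ F, q x₀ ≤ q x := by
    intro m
    induction m with
    | zero =>
      intro V hrank hP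
      have hVtop : V = ⊤ := by
        apply Submodule.eq_top_of_finrank_eq
        exact le_antisymm (Submodule.finrank_le V) (by simpa using hrank)
      subst hVtop
      obtain ⟨c₀, hc₀⟩ := hCne 0
      have hc₀D : c₀ ∈ closure (C 0 + ((⊤ : Submodule ℝ (EuclideanSpace ℝ (Fin n))) :
          Set (EuclideanSpace ℝ (Fin n)))) :=
        subset_closure ⟨c₀, hc₀, 0, Submodule.mem_top, add_zero c₀⟩
      refine ⟨c₀, hCsubF 0 hc₀, fun x hx => ?_⟩
      have := hP 0 c₀ hc₀D (x - c₀) trivial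
      rw [add_sub_cancel] at this
      rw [this]
    | succ m ih =>
      intro V hrank hP
      set D : ℕ → Set (EuclideanSpace ℝ (Fin n)) :=
        fun k => closure (C k + (V : Set (EuclideanSpace ℝ (Fin n)))) with hDdef
      have hCD : ∀ k, C k ⊆ D k := fun k x hx =>
        subset_closure ⟨x, hx, 0, V.zero_mem, add_zero x⟩
      have hDne : ∀ k, (D k).Nonempty := fun k => ((hCne k).mono (hCD k))
      have hDcl : ∀ k, IsClosed (D k) := fun k => isClosed_closure
      have hDconv : ∀ k, Convex ℝ (D k) := fun k => ((hCconv k).add V.convex).closure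
      have hDanti : ∀ {k k' : ℕ}, k ≤ k' → D k' ⊆ D k := by
        intro k k' hkk'
        exact closure_mono (Set.add_subset_add_right (hCanti hkk'))
      have hDadd : ∀ k, ∀ a ∈ D k, ∀ v ∈ V, a + v ∈ D k := by
        intro k a ha v hv
        have himg : (fun y => y + v) '' (C k + (V : Set (EuclideanSpace ℝ (Fin n))))
            ⊆ C k + (V : Set (EuclideanSpace ℝ (Fin n))) := by
          rintro _ ⟨_, ⟨cc, hcc, u, hu, rfl⟩, rfl⟩
          exact ⟨cc, hcc, u + v, V.add_mem hu hv, (add_assoc cc u v).symm⟩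
        have h1 : a + v ∈ (fun y => y + v) ''
            closure (C k + (V : Set (EuclideanSpace ℝ (Fin n)))) := ⟨a, ha, rfl⟩
        have h2 := (image_closure_subset_closure_image (continuous_add_right v)) h1
        exact closure_mono himg h2
      have hDub : ∀ k, ∀ x ∈ D k, q x ≤ μ + 1 / (k + 1) := by
        intro k
        have hsub : C k + (V : Set (EuclideanSpace ℝ (Fin n)))
            ⊆ {x : EuclideanSpace ℝ (Fin n) | q x ≤ μ + 1 / (k + 1)} := by
          rintro _ ⟨a, ha, u, hu, rfl⟩
          have := hP k a (hCD k ha) u hu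
          simp only [Set.mem_setOf_eq, this]
          exact ha.2
        intro x hx
        exact closure_minimal hsub (isClosed_le hqcont continuous_const) hx
      have hDlb : ∀ k, ∀ x ∈ D k, μ ≤ q x := by
        intro k
        have hsub : C k + (V : Set (EuclideanSpace ℝ (Fin n)))
            ⊆ {x : EuclideanSpace ℝ (Fin n) | μ ≤ q x} := by
          rintro _ ⟨a, ha, u, hu, rfl⟩
          have := hP k a (hCD k ha) u hu
          simp only [Set.mem_setOf_eq, this]
          exact hμle a ha.1
        intro x hx
        exact closure_minimal hsub (isClosed_le continuous_const hqcont) hx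
      -- minimal norm points
      have hmin : ∀ k : ℕ, ∃ v ∈ D k, ∀ y ∈ D k, ‖v‖ ≤ ‖y‖ :=
        fun k => aux_min_norm (hDne k) (hDcl k) (hDconv k)
      choose xh hxhD hxhmin using hmin
      have hperp : ∀ k, ∀ v ∈ V, (inner ℝ (xh k) v : ℝ) = 0 := by
        intro k v hv
        by_cases hv0 : v = 0
        · simp [hv0]
        have hle : ∀ t : ℝ, ‖xh k‖ ≤ ‖xh k + t • v‖ := by
          intro t
          apply hxhmin k
          exact hDadd k _ (hxhD k) _ (V.smul_mem t hv)
        set ip : ℝ := inner ℝ (xh k) v with hip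
        have hnv : (0:ℝ) < ‖v‖ ^ 2 := pow_pos (norm_pos_iff.mpr hv0) 2
        set t₀ : ℝ := -ip / ‖v‖ ^ 2 with ht₀
        have h1 : ‖xh k‖ ^ 2 ≤ ‖xh k + t₀ • v‖ ^ 2 :=
          pow_le_pow_left₀ (norm_nonneg _) (hle t₀) 2
        rw [norm_add_sq_real, real_inner_smul_right, norm_smul] at h1
        have h3 : (‖t₀‖ * ‖v‖) ^ 2 = t₀ ^ 2 * ‖v‖ ^ 2 := by
          rw [mul_pow, Real.norm_eq_abs, sq_abs]
        rw [h3] at h1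
        have h2 : (0:ℝ) ≤ 2 * (t₀ * ip) + t₀ ^ 2 * ‖v‖ ^ 2 := by nlinarith [h1]
        have h4 : 2 * (-ip / ‖v‖ ^ 2 * ip) + (-ip / ‖v‖ ^ 2) ^ 2 * ‖v‖ ^ 2
            = -(ip ^ 2) / ‖v‖ ^ 2 := by
          field_simp; ring
        rw [ht₀, h4, neg_div] at h2
        have h5 : ip ^ 2 ≤ 0 := by
          by_contra h5
          push_neg at h5
          have := div_pos h5 hnv
          linarith
        have h6 : ip = 0 := by
          have h7 : ip ^ 2 = 0 := le_antisymm h5 (sq_nonneg ip)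
          exact pow_eq_zero_iff (two_ne_zero) |>.mp h7
        exact h6
      by_cases hbdcase : ∃ R : ℝ, ∀ k, ‖xh k‖ ≤ R
      · -- bounded case
        obtain ⟨R, hR⟩ := hbdcase
        obtain ⟨xstar, _, φ, hφ, hφt⟩ :=
          tendsto_subseq_of_bounded (isBounded_closedBall (x := (0:EuclideanSpace ℝ (Fin n))) (r := R))
            (fun k => by simpa [mem_closedBall, dist_zero_right] using hR k)
        have hxstarD : ∀ k, xstar ∈ D k := by
          intro k
          refine (hDcl k).mem_of_tendsto hφt ?_
          rw [eventually_atTop]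
          exact ⟨k, fun j hj => hDanti (le_trans hj (hφ.le_apply)) (hxhD (φ j))⟩
        set M : AffineSubspace ℝ (EuclideanSpace ℝ (Fin n)) :=
          AffineSubspace.mk' xstar V with hM
        by_cases hFM : (F ∩ (M : Set (EuclideanSpace ℝ (Fin n)))).Nonempty
        · obtain ⟨y, hyF, hyM⟩ := hFM
          have hyv : y - xstar ∈ V := by
            have := (AffineSubspace.mem_mk').mp hyM
            simpa [vsub_eq_sub] using this
          have hqy : ∀ k : ℕ, q y ≤ μ + 1 / (k + 1) := by
            intro k
            have h1 := hP k xstar (hxstarD k) (y - xstar) hyv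
            rw [add_sub_cancel] at h1
            rw [h1]
            exact hDub k xstar (hxstarD k)
          have hqyμ : q y ≤ μ := by
            by_contra h
            push_neg at h
            obtain ⟨k, hk⟩ := exists_nat_one_div_lt (by linarith : (0:ℝ) < q y - μ)
            have := hqy k
            push_cast at hk ⊢
            linarith
          exact ⟨y, hyF, fun x hx => le_trans hqyμ (hμle x hx)⟩
        · exfalso
          apply hasym M
          refine ⟨⟨xstar, AffineSubspace.self_mem_mk' _ _⟩,
            Set.not_nonempty_iff_eq_empty.mp hFM, ?_⟩
          intro ε hε
          have hx0 : xstar ∈ closure (C 0 + (V : Set (EuclideanSpace ℝ (Fin n)))) := hxstarD 0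
          rw [Metric.mem_closure_iff] at hx0
          obtain ⟨z, hz, hdz⟩ := hx0 ε hε
          obtain ⟨cc, hcc, u, hu, rfl⟩ := hz
          refine ⟨cc, hCsubF 0 hcc, xstar - u, ?_, ?_⟩
          · apply (AffineSubspace.mem_mk').mpr
            simpa [vsub_eq_sub] using V.neg_mem hu
          · have heq : dist cc (xstar - u) = dist (cc + u) xstar := by
              rw [dist_eq_norm, dist_eq_norm]
              congr 1
              abel
            rw [heq, dist_comm]
            exact hdz
      · -- unbounded case
        push_neg at hbdcase
        have hmono : Monotone fun k => ‖xh k‖ := by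
          intro k k' hkk'
          exact hxhmin k _ (hDanti hkk' (hxhD k'))
        have hnb : ¬ BddAbove (Set.range fun k => ‖xh k‖) := by
          rintro ⟨R, hR⟩
          obtain ⟨k, hk⟩ := hbdcase R
          exact absurd (hR ⟨k, rfl⟩) (not_le.mpr hk)
        have htend : Tendsto (fun k => ‖xh k‖) atTop atTop :=
          tendsto_atTop_atTop_of_monotone' hmono hnb
        set uu : ℕ → EuclideanSpace ℝ (Fin n) := fun k => ‖xh k‖⁻¹ • xh k with huu
        have hu1 : ∀ k, uu k ∈ closedBall (0:EuclideanSpace ℝ (Fin n)) 1 := by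
          intro k
          rw [mem_closedBall, dist_zero_right, huu]
          simp only [norm_smul, norm_inv, norm_norm]
          rcases eq_or_ne (xh k) 0 with h | h
          · simp [h]
          · rw [inv_mul_cancel₀ (norm_ne_zero_iff.mpr h)]
        obtain ⟨w, _, φ, hφ, hwt⟩ :=
          tendsto_subseq_of_bounded
            (isBounded_closedBall (x := (0:EuclideanSpace ℝ (Fin n))) (r := 1)) hu1
        obtain ⟨K₀, hK₀⟩ : ∃ K₀ : ℕ, ∀ k ≥ K₀, 1 ≤ ‖xh k‖ := by
          have := htend.eventually_ge_atTop 1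
          rwa [eventually_atTop] at this
        have hwnorm : ‖w‖ = 1 := by
          have h1 : Tendsto (fun j => ‖uu (φ j)‖) atTop (𝓝 ‖w‖) := hwt.norm
          have h2 : ∀ᶠ j in atTop, ‖uu (φ j)‖ = 1 := by
            rw [eventually_atTop]
            refine ⟨K₀, fun j hj => ?_⟩
            have hφj : K₀ ≤ φ j := le_trans hj hφ.le_apply
            have hpos : (0:ℝ) < ‖xh (φ j)‖ := lt_of_lt_of_le one_pos (hK₀ _ hφj)
            simp only [huu, norm_smul, norm_inv, norm_norm]
            exact inv_mul_cancel₀ (ne_of_gt hpos)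
          have h3 : Tendsto (fun j => ‖uu (φ j)‖) atTop (𝓝 1) :=
            Tendsto.congr' (h2.mono fun j hj => hj.symm) tendsto_const_nhds
          exact tendsto_nhds_unique h1 h3
        have hwne : w ≠ 0 := by
          intro h
          rw [h, norm_zero] at hwnorm
          norm_num at hwnorm
        have hwperp : ∀ v ∈ V, (inner ℝ w v : ℝ) = 0 := by
          intro v hv
          have h1 : Tendsto (fun j => (inner ℝ (uu (φ j)) v : ℝ)) atTop (𝓝 (inner ℝ w v)) :=
            hwt.inner tendsto_const_nhds
          have h2 : ∀ j, (inner ℝ (uu (φ j)) v : ℝ) = 0 := by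
            intro j
            simp only [huu, real_inner_smul_left]
            rw [hperp (φ j) v hv, mul_zero]
          rw [funext h2] at h1
          exact tendsto_nhds_unique h1 tendsto_const_nhds
        have hwV : w ∉ V := by
          intro hmem
          exact hwne (inner_self_eq_zero.mp (hwperp w hmem))
        have hrec : ∀ k, ∀ x ∈ D k, ∀ t : ℝ, 0 ≤ t → x + t • w ∈ D k := by
          intro k x hx t ht
          refine aux_recession (z := fun j => xh (φ (j + k))) (hDcl k) (hDconv k)
            (fun j => hDanti (le_trans (Nat.le_add_left k j) (hφ.le_apply)) (hxhD _))
            ?_ ?_ hx ht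
          · exact htend.comp (hφ.tendsto_atTop.comp (tendsto_add_atTop_nat k))
          · exact hwt.comp (tendsto_add_atTop_nat k)
        have hcoef : ∀ k, ∀ x ∈ D k, B w w = 0 ∧ B x w + B w x + l w = 0 := by
          intro k x hx
          apply aux_poly (m := μ - q x) (M := μ + 1 / (k + 1) - q x)
          intro t ht
          have hmem := hrec k x hx t ht
          have he : q (x + t • w) = q x + (B x w + B w x + l w) * t + B w w * t ^ 2 := by
            rw [hqadd]
            simp only [map_smul, LinearMap.smul_apply, smul_eq_mul]
            ring
          have h1 := hDlb k _ hmem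
          have h2 := hDub k _ hmem
          rw [he] at h1 h2
          constructor <;> linarith
        have haff : ∀ k, ∀ x ∈ D k, ∀ v ∈ V, B v v + (B x v + B v x) + l v = 0 := by
          intro k x hx v hv
          have := hP k x hx v hv
          rw [hqadd] at this
          linarith
        obtain ⟨c₀, hc₀⟩ := hCne 0
        have hc₀D : c₀ ∈ D 0 := hCD 0 hc₀
        have hsymV : ∀ v ∈ V, ∀ v₁ ∈ V, B v₁ v + B v v₁ = 0 := by
          intro v hv v₁ hv₁
          have h1 := haff 0 c₀ hc₀D v hv
          have h2 := haff 0 (c₀ + v₁) (hDadd 0 c₀ hc₀D v₁ hv₁) v hv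
          simp only [map_add, LinearMap.add_apply] at h2
          linarith
        have hsymw : ∀ v ∈ V, B v w + B w v = 0 := by
          intro v hv
          have h1 := (hcoef 0 c₀ hc₀D).2
          have h2 := (hcoef 0 (c₀ + v) (hDadd 0 c₀ hc₀D v hv)).2
          simp only [map_add, LinearMap.add_apply] at h2
          linarith
        set V' : Submodule ℝ (EuclideanSpace ℝ (Fin n)) :=
          V ⊔ Submodule.span ℝ {w} with hV'
        have hrank' : Module.finrank ℝ (EuclideanSpace ℝ (Fin n))
            ≤ Module.finrank ℝ V' + m := by
          have hlt : V < V' := SetLike.lt_iff_le_and_exists.mpr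
            ⟨le_sup_left, w, Submodule.mem_sup_right (Submodule.mem_span_singleton_self w), hwV⟩
          have := Submodule.finrank_lt_finrank_of_lt hlt
          omega
        have hP' : ∀ k : ℕ, ∀ x ∈ closure (C k + (V' : Set (EuclideanSpace ℝ (Fin n)))),
            ∀ u' ∈ V', q (x + u') = q x := by
          intro k
          have hstep : ∀ u' ∈ V', ∀ x ∈ C k + (V' : Set (EuclideanSpace ℝ (Fin n))),
              q (x + u') = q x := by
            intro u' hu' x hx
            obtain ⟨v, hv, z, hz, rfl⟩ := Submodule.mem_sup.mp hu'
            obtain ⟨t, rfl⟩ := Submodule.mem_span_singleton.mp hz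
            obtain ⟨cc, hcc, u₂, hu₂, rfl⟩ := hx
            obtain ⟨v₁, hv₁, z₁, hz₁, rfl⟩ := Submodule.mem_sup.mp hu₂
            obtain ⟨t₁, rfl⟩ := Submodule.mem_span_singleton.mp hz₁
            have f1 := haff k cc (hCD k hcc) v hv
            have f2 := (hcoef k cc (hCD k hcc)).1
            have f3 := (hcoef k cc (hCD k hcc)).2
            have f4 := hsymw v hv
            have f5 := hsymw v₁ hv₁
            have f6 := hsymV v hv v₁ hv₁
            rw [hqadd]
            have hz : (B (cc + (v₁ + t₁ • w)) (v + t • w) + B (v + t • w) (cc + (v₁ + t₁ • w))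
                + l (v + t • w)) + B (v + t • w) (v + t • w) = 0 := by
              simp only [map_add, map_smul, LinearMap.add_apply, LinearMap.smul_apply,
                smul_eq_mul]
              linear_combination f1 + f6 + t * f4 + t * f3 + t * f5 + t₁ * f4
                + (t ^ 2 + 2 * t * t₁) * f2
            linarith
          intro x hx u' hu'
          have hclosed : IsClosed {y : EuclideanSpace ℝ (Fin n) | q (y + u') = q y} :=
            isClosed_eq (hqcont.comp (continuous_add_right u')) hqcont
          exact closure_minimal (fun y hy => hstep u' hu' y hy) hclosed hx
        exact ih V' hrank' hP'
  refine key (Module.finrank ℝ (EuclideanSpace ℝ (Fin n))) ⊥ (by simp) ?_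
  intro k x hx u hu
  rw [Submodule.mem_bot] at hu
  subst hu
  rw [add_zero]
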